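/- There exist valid two-party processes W (on parties A', B') and Z (on parties A'', B'') — which may moreover be taken equal to each other and classical, namely an equal-weight mixture of a classical identity channel from one party to the other and one in the opposite direction — such that the tensor product W ⊗ Z is not a valid process for the combined parties A = A'A'' and B = B'B''. -/

import Mathlib

open Matrix Kronecker BigOperators
open scoped ComplexOrder

namespace ProcessPaper

/-- A (generalized) Hilbert–Schmidt basis of operators on a finite-dimensional Hilbert
space with orthonormal basis indexed by `n`: a family of Hermitian matrices indexed by
`ι` (with `Fintype.card ι = (Fintype.card n) ^ 2`), whose distinguished element `σ 0`
is the identity, whose other elements are traceless, which are mutually orthogonal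
under the trace inner product, and which are all nonzero. -/
def IsHSBasis {n : Type*} [Fintype n] [DecidableEq n] {ι : Type*} [Fintype ι] [Zero ι]
    (σ : ι → Matrix n n ℂ) : Prop :=
  Fintype.card ι = (Fintype.card n) ^ 2 ∧
  (∀ i, (σ i).IsHermitian) ∧
  σ 0 = 1 ∧
  (∀ i, i ≠ 0 → (σ i).trace = 0) ∧
  (∀ i j, i ≠ j → (σ i * σ j).trace = 0) ∧
  (∀ i, σ i ≠ 0)

variable {P : Type*} [Fintype P] [DecidableEq P]

section defs

variable {I O : P → Type*} [∀ p, Fintype (I p)] [∀ p, DecidableEq (I p)]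
  [∀ p, Fintype (O p)] [∀ p, DecidableEq (O p)]
  {ιI ιO : P → Type*} [∀ p, Fintype (ιI p)] [∀ p, Zero (ιI p)]
  [∀ p, Fintype (ιO p)] [∀ p, Zero (ιO p)]

/-- The tensor product, over all parties, of party-local operators
(each party `p` carries the Hilbert space of its input system `I p`
tensored with its output system `O p`). -/
def tensorFamily (M : ∀ p, Matrix (I p × O p) (I p × O p) ℂ) :
    Matrix ((p : P) → I p × O p) ((p : P) → I p × O p) ℂ :=
  fun x y => ∏ p, M p (x p) (y p)

/-- The Hilbert–Schmidt basis term with multi-index `t`: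
`⨂_p σI p (t p).1 ⊗ σO p (t p).2`. -/
def hsTerm (σI : ∀ p, ιI p → Matrix (I p) (I p) ℂ)
    (σO : ∀ p, ιO p → Matrix (O p) (O p) ℂ)
    (t : ∀ p, ιI p × ιO p) :
    Matrix ((p : P) → I p × O p) ((p : P) → I p × O p) ℂ :=
  fun x y => ∏ p, σI p (t p).1 (x p).1 (y p).1 * σO p (t p).2 (x p).2 (y p).2

/-- The operator with Hilbert–Schmidt coefficients `w`. -/
noncomputable def expand (σI : ∀ p, ιI p → Matrix (I p) (I p) ℂ)
    (σO : ∀ p, ιO p → Matrix (O p) (O p) ℂ)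
    (w : (∀ p, ιI p × ιO p) → ℝ) :
    Matrix ((p : P) → I p × O p) ((p : P) → I p × O p) ℂ :=
  ∑ t : ∀ p, ιI p × ιO p, (w t : ℂ) • hsTerm σI σO t

end defs

section types

variable {ιI ιO : P → Type*} [∀ p, Zero (ιI p)] [∀ p, Zero (ιO p)]

/-- A term is trivial on party `p` if its indices on both the input and the output
system of `p` are zero (identity factor on party `p`). -/
def TrivialAt (t : ∀ p, ιI p × ιO p) (p : P) : Prop :=
  (t p).1 = 0 ∧ (t p).2 = 0

/-- A term is in type on party `p` if it is nontrivial on the input system of `p`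
and trivial (identity) on the output system of `p`. -/
def InTypeAt (t : ∀ p, ιI p × ιO p) (p : P) : Prop :=
  (t p).1 ≠ 0 ∧ (t p).2 = 0

/-- A term includes the out type on party `p` if it is nontrivial on the output
system of `p`. -/
def IncludesOutAt (t : ∀ p, ιI p × ιO p) (p : P) : Prop :=
  (t p).2 ≠ 0

/-- A term is nontrivial if it is nontrivial on some party
(i.e. it is not the identity term). -/
def NontrivialTerm (t : ∀ p, ιI p × ιO p) : Prop :=
  ∃ p, ¬ TrivialAt t p

/-- The Oreshkov–Giarmatzi condition on Hilbert–Schmidt coefficients: every nonzero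
nontrivial term is in type on at least one party. -/
def OGCoeffs (w : (∀ p, ιI p × ιO p) → ℝ) : Prop :=
  ∀ t, w t ≠ 0 → NontrivialTerm t → ∃ p, InTypeAt t p

end types

section process

variable {I O : P → Type*} [∀ p, Fintype (I p)] [∀ p, DecidableEq (I p)]
  [∀ p, Fintype (O p)] [∀ p, DecidableEq (O p)]
  {ιI ιO : P → Type*} [∀ p, Fintype (ιI p)] [∀ p, Zero (ιI p)]
  [∀ p, Fintype (ιO p)] [∀ p, Zero (ιO p)]

/-- `W` is a valid process with Hilbert–Schmidt coefficients `w` (relative to the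
Hilbert–Schmidt bases `σI`, `σO`): it is positive semidefinite, has trace equal to the
product `d_O` of the output dimensions, has expansion given by `w`, and every nonzero
nontrivial Hilbert–Schmidt term of it is in type on at least one party. -/
def IsProcessWith (σI : ∀ p, ιI p → Matrix (I p) (I p) ℂ)
    (σO : ∀ p, ιO p → Matrix (O p) (O p) ℂ)
    (W : Matrix ((p : P) → I p × O p) ((p : P) → I p × O p) ℂ)
    (w : (∀ p, ιI p × ιO p) → ℝ) : Prop :=
  W.PosSemidef ∧
  W.trace = ∏ p, (Fintype.card (O p) : ℂ) ∧
  W = expand σI σO w ∧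
  OGCoeffs w

/-- `W` is a valid process (relative to the Hilbert–Schmidt bases `σI`, `σO`). -/
def IsProcess (σI : ∀ p, ιI p → Matrix (I p) (I p) ℂ)
    (σO : ∀ p, ιO p → Matrix (O p) (O p) ℂ)
    (W : Matrix ((p : P) → I p × O p) ((p : P) → I p × O p) ℂ) : Prop :=
  ∃ w, IsProcessWith σI σO W w

end process

section product

variable {I' O' I'' O'' : P → Type*}

/-- The tensor product `P = W ⊗ Z` of an operator `W` for parties `A', B', …` and an
operator `Z` for parties `A'', B'', …`, regarded as an operator for the combined
parties `A = A'A''` (input `a₁ = a₁'a₁''`, output `a₂ = a₂'a₂''`), `B = B'B''`, …. -/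
def prodOp (W : Matrix ((p : P) → I' p × O' p) ((p : P) → I' p × O' p) ℂ)
    (Z : Matrix ((p : P) → I'' p × O'' p) ((p : P) → I'' p × O'' p) ℂ) :
    Matrix ((p : P) → (I' p × I'' p) × (O' p × O'' p))
      ((p : P) → (I' p × I'' p) × (O' p × O'' p)) ℂ :=
  fun x y =>
    W (fun p => ((x p).1.1, (x p).2.1)) (fun p => ((y p).1.1, (y p).2.1)) *
    Z (fun p => ((x p).1.2, (x p).2.2)) (fun p => ((y p).1.2, (y p).2.2))

end product

/-- The Hilbert–Schmidt basis of a combined system, consisting of the tensor (Kronecker)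
products of the basis elements of the two subsystems; its distinguished (identity)
element is the product of the two distinguished elements. -/
def prodBasis {n n' ι ι' : Type*} (σ : ι → Matrix n n ℂ) (σ' : ι' → Matrix n' n' ℂ) :
    ι × ι' → Matrix (n × n') (n × n') ℂ :=
  fun i => σ i.1 ⊗ₖ σ' i.2

section coeffs

variable {ιI' ιO' ιI'' ιO'' : P → Type*}

/-- The Hilbert–Schmidt coefficients of a tensor product `W ⊗ Z` in terms of the
coefficients `w` of `W` and `z` of `Z`. -/
def prodCoeffs (w : (∀ p, ιI' p × ιO' p) → ℝ) (z : (∀ p, ιI'' p × ιO'' p) → ℝ) :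
    (∀ p, (ιI' p × ιI'' p) × (ιO' p × ιO'' p)) → ℝ :=
  fun u => w (fun p => ((u p).1.1, (u p).2.1)) * z (fun p => ((u p).1.2, (u p).2.2))

/-- The multi-index of the tensor product of the term `t` of `W` and the term `s`
of `Z`, as a term for the combined parties. -/
def combineTerm (t : ∀ p, ιI' p × ιO' p) (s : ∀ p, ιI'' p × ιO'' p) :
    ∀ p, (ιI' p × ιI'' p) × (ιO' p × ιO'' p) :=
  fun p => (((t p).1, (s p).1), ((t p).2, (s p).2))

end coeffs

section twoparty

variable {ιI ιO : Fin 2 → Type*} [∀ p, Zero (ιI p)] [∀ p, Zero (ιO p)]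

/-- For two parties `A` (party `0`) and `B` (party `1`), an `A` to `B` signalling
term: a term of type `a₂b₁` or `a₁a₂b₁`, i.e. nontrivial on `a₂` and on `b₁` and
trivial on `b₂`. -/
def AtoBSig (t : ∀ p, ιI p × ιO p) : Prop :=
  (t 0).2 ≠ 0 ∧ (t 1).1 ≠ 0 ∧ (t 1).2 = 0

/-- A `B` to `A` signalling term: a term of type `a₁b₂` or `a₁b₁b₂`, i.e. nontrivial
on `b₂` and on `a₁` and trivial on `a₂`. -/
def BtoASig (t : ∀ p, ιI p × ιO p) : Prop :=
  (t 1).2 ≠ 0 ∧ (t 0).1 ≠ 0 ∧ (t 0).2 = 0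

end twoparty

/-- The Pauli (Hilbert–Schmidt) basis `{𝟙, σ₁, σ₂, σ₃}` of qubit operators. -/
noncomputable def pauli : Fin 4 → Matrix (Fin 2) (Fin 2) ℂ :=
  ![1, !![0, 1; 1, 0], !![0, -Complex.I; Complex.I, 0], !![1, 0; 0, -1]]

/-- The maximally mixed qubit state `ω = 𝟙/2`. -/
noncomputable def omega2 : Matrix (Fin 2) (Fin 2) ℂ := (2 : ℂ)⁻¹ • 1

/-- The maximally correlating two-qubit state `ρ_∼ = (𝟙⊗𝟙 + σ₃⊗σ₃)/4`. -/
noncomputable def rhoCorr2 : Matrix (Fin 2 × Fin 2) (Fin 2 × Fin 2) ℂ :=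
  (4 : ℂ)⁻¹ • ((1 : Matrix (Fin 2) (Fin 2) ℂ) ⊗ₖ (1 : Matrix (Fin 2) (Fin 2) ℂ)
    + pauli 3 ⊗ₖ pauli 3)

/-- The two-party qubit process
`W = (d_O/2) (ω^{x₁} ⊗ ρ_∼^{x₂y₁} ⊗ ω^{y₂} + ω^{x₂} ⊗ ρ_∼^{x₁y₂} ⊗ ω^{y₁})`
(`d_O = 4`), written as a matrix on the total Hilbert space of the two parties
`0 = X` (input `x₁`, output `x₂`) and `1 = Y` (input `y₁`, output `y₂`),
all four systems being qubits. -/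
noncomputable def Wq :
    Matrix ((p : Fin 2) → Fin 2 × Fin 2) ((p : Fin 2) → Fin 2 × Fin 2) ℂ :=
  fun x y =>
    2 * (omega2 (x 0).1 (y 0).1 * rhoCorr2 ((x 0).2, (x 1).1) ((y 0).2, (y 1).1)
          * omega2 (x 1).2 (y 1).2
       + omega2 (x 0).2 (y 0).2 * rhoCorr2 ((x 0).1, (x 1).2) ((y 0).1, (y 1).2)
          * omega2 (x 1).1 (y 1).1)

/-- The maximally mixed state `ω = 𝟙/4` of a 4-dimensional (two-qubit) system. -/
noncomputable def omega4 : Matrix (Fin 2 × Fin 2) (Fin 2 × Fin 2) ℂ := (4 : ℂ)⁻¹ • 1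

/-- The maximally correlating state `ρ_∼ = (1/4) ∑_{i=0}^{3} |ii⟩⟨ii|` of two copies of a
4-dimensional (two-qubit) system, in the computational basis. -/
noncomputable def rhoCorr4 :
    Matrix ((Fin 2 × Fin 2) × (Fin 2 × Fin 2)) ((Fin 2 × Fin 2) × (Fin 2 × Fin 2)) ℂ :=
  fun r c => if r.1 = r.2 ∧ c.1 = c.2 ∧ r.1 = c.1 then (4 : ℂ)⁻¹ else 0

/-- The two-party process
`W = (d_O/2) (ω^{a₁} ⊗ ρ_∼^{a₂b₁} ⊗ ω^{b₂} + ω^{a₂} ⊗ ρ_∼^{a₁b₂} ⊗ ω^{b₁})`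
(`d_O = 16`) on the combined parties `0 = A = A'A''` and `1 = B = B'B''`, whose systems
`a₁ = a₁'a₁''` etc. are each two qubits: the first qubit of each pair is the primed
system, the second the double-primed one. -/
noncomputable def W4 :
    Matrix ((p : Fin 2) → (Fin 2 × Fin 2) × (Fin 2 × Fin 2))
      ((p : Fin 2) → (Fin 2 × Fin 2) × (Fin 2 × Fin 2)) ℂ :=
  fun x y =>
    8 * (omega4 (x 0).1 (y 0).1 * rhoCorr4 ((x 0).2, (x 1).1) ((y 0).2, (y 1).1)
          * omega4 (x 1).2 (y 1).2
       + omega4 (x 0).2 (y 0).2 * rhoCorr4 ((x 0).1, (x 1).2) ((y 0).1, (y 1).2)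
          * omega4 (x 1).1 (y 1).1)

/-- Partial trace over the double-primed systems `a₁'', a₂'', b₁'', b₂''` (the second
qubit of each of the four two-qubit systems). -/
noncomputable def ptraceSecond
    (W : Matrix ((p : Fin 2) → (Fin 2 × Fin 2) × (Fin 2 × Fin 2))
      ((p : Fin 2) → (Fin 2 × Fin 2) × (Fin 2 × Fin 2)) ℂ) :
    Matrix ((p : Fin 2) → Fin 2 × Fin 2) ((p : Fin 2) → Fin 2 × Fin 2) ℂ :=
  fun x y => ∑ e : (p : Fin 2) → Fin 2 × Fin 2,
    W (fun p => (((x p).1, (e p).1), ((x p).2, (e p).2)))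
      (fun p => (((y p).1, (e p).1), ((y p).2, (e p).2)))

/-- Partial trace over the primed systems `a₁', a₂', b₁', b₂'` (the first qubit of each
of the four two-qubit systems). -/
noncomputable def ptraceFirst
    (W : Matrix ((p : Fin 2) → (Fin 2 × Fin 2) × (Fin 2 × Fin 2))
      ((p : Fin 2) → (Fin 2 × Fin 2) × (Fin 2 × Fin 2)) ℂ) :
    Matrix ((p : Fin 2) → Fin 2 × Fin 2) ((p : Fin 2) → Fin 2 × Fin 2) ℂ :=
  fun x y => ∑ e : (p : Fin 2) → Fin 2 × Fin 2,
    W (fun p => (((e p).1, (x p).1), ((e p).2, (x p).2)))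
      (fun p => (((e p).1, (y p).1), ((e p).2, (y p).2)))


section AuxGeneric
set_option linter.unusedSectionVars false

variable {P : Type*} [Fintype P] [DecidableEq P]
  {I O : P → Type*} [∀ p, Fintype (I p)] [∀ p, DecidableEq (I p)]
  [∀ p, Fintype (O p)] [∀ p, DecidableEq (O p)]
  {ιI ιO : P → Type*} [∀ p, Fintype (ιI p)] [∀ p, Zero (ιI p)]
  [∀ p, Fintype (ιO p)] [∀ p, Zero (ιO p)]

lemma hsTerm_eq_tensorFamily (σI : ∀ p, ιI p → Matrix (I p) (I p) ℂ)
    (σO : ∀ p, ιO p → Matrix (O p) (O p) ℂ) (t : ∀ p, ιI p × ιO p) :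
    hsTerm σI σO t = tensorFamily (fun p => σI p (t p).1 ⊗ₖ σO p (t p).2) := rfl

lemma tensorFamily_mul (M N : ∀ p, Matrix (I p × O p) (I p × O p) ℂ) :
    tensorFamily M * tensorFamily N = tensorFamily (fun p => M p * N p) := by
  ext x y
  simp only [tensorFamily, Matrix.mul_apply, ← Finset.prod_mul_distrib]
  exact (Fintype.prod_sum fun p j => M p (x p) j * N p j (y p)).symm

lemma trace_tensorFamily (M : ∀ p, Matrix (I p × O p) (I p × O p) ℂ) :
    (tensorFamily M).trace = ∏ p, (M p).trace := by
  simp only [Matrix.trace, Matrix.diag, tensorFamily]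
  exact (Fintype.prod_sum fun p a => M p a a).symm

lemma trace_hsTerm (σI : ∀ p, ιI p → Matrix (I p) (I p) ℂ)
    (σO : ∀ p, ιO p → Matrix (O p) (O p) ℂ) (t : ∀ p, ιI p × ιO p) :
    (hsTerm σI σO t).trace = ∏ p, ((σI p (t p).1).trace * (σO p (t p).2).trace) := by
  rw [hsTerm_eq_tensorFamily, trace_tensorFamily]
  simp [Matrix.trace_kronecker]

lemma trace_hsTerm_mul (σI : ∀ p, ιI p → Matrix (I p) (I p) ℂ)
    (σO : ∀ p, ιO p → Matrix (O p) (O p) ℂ) (t s : ∀ p, ιI p × ιO p) :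
    (hsTerm σI σO t * hsTerm σI σO s).trace
      = ∏ p, ((σI p (t p).1 * σI p (s p).1).trace * (σO p (t p).2 * σO p (s p).2).trace) := by
  rw [hsTerm_eq_tensorFamily, hsTerm_eq_tensorFamily, tensorFamily_mul, trace_tensorFamily]
  simp [← Matrix.mul_kronecker_mul, Matrix.trace_kronecker]

end AuxGeneric
section AuxPauli

lemma pauli_trace (i : Fin 4) : (pauli i).trace = if i = 0 then 2 else 0 := by
  fin_cases i <;>
    simp [pauli, Matrix.trace, Matrix.diag, Fin.sum_univ_two, Matrix.one_apply] <;> norm_num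

lemma pauli_mul_trace (i j : Fin 4) : (pauli i * pauli j).trace = if i = j then 2 else 0 := by
  fin_cases i <;> fin_cases j <;>
    simp [pauli, Matrix.trace, Matrix.diag, Matrix.mul_apply, Fin.sum_univ_two,
      Matrix.one_apply, Complex.I_mul_I] <;>
    norm_num [Complex.ext_iff]

lemma prodBasis_mul_trace (i j : Fin 4 × Fin 4) :
    (prodBasis pauli pauli i * prodBasis pauli pauli j).trace = if i = j then 4 else 0 := by
  rcases i with ⟨i1, i2⟩
  rcases j with ⟨j1, j2⟩
  simp only [prodBasis, ← Matrix.mul_kronecker_mul, Matrix.trace_kronecker, pauli_mul_trace,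
    Prod.mk.injEq]
  by_cases h1 : i1 = j1 <;> by_cases h2 : i2 = j2 <;> simp [h1, h2] <;> norm_num

lemma p3_apply (a b : Fin 2) :
    pauli 3 a b = if a = b then (if a = 0 then 1 else -1) else 0 := by
  fin_cases a <;> fin_cases b <;> simp [pauli]

end AuxPauli
section AuxWq

/-- identity term -/
def tI : ∀ _ : Fin 2, Fin 4 × Fin 4 := fun _ => (0, 0)
/-- A-to-B signalling term -/
def tA : ∀ _ : Fin 2, Fin 4 × Fin 4 := ![(0, 3), (3, 0)]
/-- B-to-A signalling term -/
def tB : ∀ _ : Fin 2, Fin 4 × Fin 4 := ![(3, 0), (0, 3)]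

/-- HS coefficients of `Wq`. -/
noncomputable def wq : (∀ _ : Fin 2, Fin 4 × Fin 4) → ℝ := fun t =>
  (if t = tI then 4⁻¹ else 0) + (if t = tA then 8⁻¹ else 0) + (if t = tB then 8⁻¹ else 0)

lemma expand_wq :
    expand (fun _ : Fin 2 => pauli) (fun _ : Fin 2 => pauli) wq
      = (4⁻¹ : ℂ) • hsTerm (fun _ : Fin 2 => pauli) (fun _ : Fin 2 => pauli) tI
        + (8⁻¹ : ℂ) • hsTerm (fun _ : Fin 2 => pauli) (fun _ : Fin 2 => pauli) tA
        + (8⁻¹ : ℂ) • hsTerm (fun _ : Fin 2 => pauli) (fun _ : Fin 2 => pauli) tB := by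
  unfold expand wq
  push_cast [apply_ite (fun r : ℝ => (r : ℂ))]
  simp [add_smul, ite_smul, Finset.sum_add_distrib, Finset.sum_ite_eq']

lemma Wq_eq :
    Wq = (4⁻¹ : ℂ) • hsTerm (fun _ : Fin 2 => pauli) (fun _ : Fin 2 => pauli) tI
        + (8⁻¹ : ℂ) • hsTerm (fun _ : Fin 2 => pauli) (fun _ : Fin 2 => pauli) tA
        + (8⁻¹ : ℂ) • hsTerm (fun _ : Fin 2 => pauli) (fun _ : Fin 2 => pauli) tB := by
  have hp0 : pauli 0 = 1 := rfl
  ext x y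
  simp only [Wq, omega2, rhoCorr2, hsTerm, tI, tA, tB, Matrix.add_apply, Matrix.smul_apply,
    Matrix.kroneckerMap_apply, Fin.prod_univ_two, smul_eq_mul, Matrix.cons_val_zero,
    Matrix.cons_val_one, Matrix.head_cons, hp0]
  ring

lemma Wq_eq_expand : Wq = expand (fun _ : Fin 2 => pauli) (fun _ : Fin 2 => pauli) wq :=
  Wq_eq.trans expand_wq.symm

end AuxWq
section AuxWq2

/-- diagonal of `Wq` -/
noncomputable def dq : ((p : Fin 2) → Fin 2 × Fin 2) → ℂ := fun x =>
  (if (x 0).2 = (x 1).1 then (4 : ℂ)⁻¹ else 0) + (if (x 0).1 = (x 1).2 then (4 : ℂ)⁻¹ else 0)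

lemma Wq_diag : Wq = Matrix.diagonal dq := by
  have hp0 : pauli 0 = 1 := rfl
  have hval : ∀ a b : Fin 2,
      (if a = 0 then (1 : ℂ) else -1) * (if b = 0 then 1 else -1) = if a = b then 1 else -1 := by
    intro a b; fin_cases a <;> fin_cases b <;> norm_num
  ext x y
  rw [Wq_eq]
  by_cases h : x = y
  · subst h
    simp only [Matrix.diagonal_apply_eq, Matrix.add_apply, Matrix.smul_apply, hsTerm,
      Fin.prod_univ_two, smul_eq_mul, tI, tA, tB, Matrix.cons_val_zero, Matrix.cons_val_one,
      Matrix.head_cons, hp0, Matrix.one_apply_eq, p3_apply, if_pos rfl, dq, if_true,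
      one_mul, mul_one]
    rw [hval, hval]
    split_ifs <;> norm_num
  · rw [Matrix.diagonal_apply_ne _ h]
    have hex : ∃ p, x p ≠ y p := by
      by_contra hc; push_neg at hc; exact h (funext hc)
    obtain ⟨p, hp⟩ := hex
    have hp2 : (x p).1 ≠ (y p).1 ∨ (x p).2 ≠ (y p).2 := by
      by_cases h1 : (x p).1 = (y p).1
      · exact Or.inr fun h2 => hp (Prod.ext h1 h2)
      · exact Or.inl h1
    have hcase : p = 0 ∨ p = 1 := by fin_cases p; exacts [Or.inl rfl, Or.inr rfl]
    rcases hcase with rfl | rfl <;> rcases hp2 with h1 | h1 <;>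
      simp [Matrix.add_apply, hsTerm, Fin.prod_univ_two, tI, tA, tB,
        Matrix.one_apply_ne h1, p3_apply, h1, hp0]

lemma Wq_psd : Wq.PosSemidef := by
  rw [Wq_diag]
  refine Matrix.posSemidef_diagonal_iff.mpr fun i => ?_
  unfold dq
  split_ifs <;> norm_num [Complex.le_def]

lemma Wq_offdiag : ∀ x y, x ≠ y → Wq x y = 0 := by
  intro x y h
  rw [Wq_diag, Matrix.diagonal_apply_ne _ h]

lemma Wq_trace : Wq.trace = 4 := by
  rw [Wq_eq]
  simp [Matrix.trace_add, Matrix.trace_smul, trace_hsTerm, Fin.prod_univ_two, pauli_trace,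
    tI, tA, tB]
  norm_num

lemma wq_og : OGCoeffs wq := by
  intro t ht hnt
  have hmem : t = tI ∨ t = tA ∨ t = tB := by
    by_contra hc
    push_neg at hc
    obtain ⟨h1, h2, h3⟩ := hc
    simp [wq, h1, h2, h3] at ht
  rcases hmem with rfl | rfl | rfl
  · obtain ⟨p, hp⟩ := hnt
    exact absurd ⟨rfl, rfl⟩ hp
  · exact ⟨1, by constructor <;> decide⟩
  · exact ⟨0, by constructor <;> decide⟩

lemma Wq_isProcessWith :
    IsProcessWith (fun _ : Fin 2 => pauli) (fun _ : Fin 2 => pauli) Wq wq := by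
  refine ⟨Wq_psd, ?_, Wq_eq_expand, wq_og⟩
  rw [Wq_trace]
  simp [Fin.prod_univ_two]
  norm_num

end AuxWq2
section AuxProd
set_option linter.unusedSectionVars false

variable {P : Type*} [Fintype P] [DecidableEq P]
  {I' O' I'' O'' : P → Type*}
  [∀ p, Fintype (I' p)] [∀ p, DecidableEq (I' p)] [∀ p, Fintype (O' p)] [∀ p, DecidableEq (O' p)]
  [∀ p, Fintype (I'' p)] [∀ p, DecidableEq (I'' p)]
  [∀ p, Fintype (O'' p)] [∀ p, DecidableEq (O'' p)]
  {ιI' ιO' ιI'' ιO'' : P → Type*}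
  [∀ p, Fintype (ιI' p)] [∀ p, Zero (ιI' p)] [∀ p, Fintype (ιO' p)] [∀ p, Zero (ιO' p)]
  [∀ p, Fintype (ιI'' p)] [∀ p, Zero (ιI'' p)] [∀ p, Fintype (ιO'' p)] [∀ p, Zero (ιO'' p)]

/-- combining terms is a bijection -/
def combEquiv :
    ((∀ p, ιI' p × ιO' p) × (∀ p, ιI'' p × ιO'' p)) ≃
      (∀ p, (ιI' p × ιI'' p) × (ιO' p × ιO'' p)) where
  toFun ts := combineTerm ts.1 ts.2
  invFun u := (fun p => ((u p).1.1, (u p).2.1), fun p => ((u p).1.2, (u p).2.2))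
  left_inv _ := rfl
  right_inv _ := rfl

lemma hsTerm_combine (σI' : ∀ p, ιI' p → Matrix (I' p) (I' p) ℂ)
    (σO' : ∀ p, ιO' p → Matrix (O' p) (O' p) ℂ)
    (σI'' : ∀ p, ιI'' p → Matrix (I'' p) (I'' p) ℂ)
    (σO'' : ∀ p, ιO'' p → Matrix (O'' p) (O'' p) ℂ)
    (t : ∀ p, ιI' p × ιO' p) (s : ∀ p, ιI'' p × ιO'' p)
    (x y : ∀ p, (I' p × I'' p) × (O' p × O'' p)) :
    hsTerm (fun p => prodBasis (σI' p) (σI'' p)) (fun p => prodBasis (σO' p) (σO'' p))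
        (combineTerm t s) x y
      = hsTerm σI' σO' t (fun p => ((x p).1.1, (x p).2.1)) (fun p => ((y p).1.1, (y p).2.1))
        * hsTerm σI'' σO'' s (fun p => ((x p).1.2, (x p).2.2))
            (fun p => ((y p).1.2, (y p).2.2)) := by
  simp only [hsTerm, prodBasis, combineTerm, Matrix.kroneckerMap_apply,
    ← Finset.prod_mul_distrib]
  exact Finset.prod_congr rfl fun p _ => by ring

lemma prodOp_expand (σI' : ∀ p, ιI' p → Matrix (I' p) (I' p) ℂ)
    (σO' : ∀ p, ιO' p → Matrix (O' p) (O' p) ℂ)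
    (σI'' : ∀ p, ιI'' p → Matrix (I'' p) (I'' p) ℂ)
    (σO'' : ∀ p, ιO'' p → Matrix (O'' p) (O'' p) ℂ)
    (w : (∀ p, ιI' p × ιO' p) → ℝ) (z : (∀ p, ιI'' p × ιO'' p) → ℝ) :
    prodOp (expand σI' σO' w) (expand σI'' σO'' z)
      = expand (fun p => prodBasis (σI' p) (σI'' p)) (fun p => prodBasis (σO' p) (σO'' p))
          (prodCoeffs w z) := by
  funext x y
  simp only [prodOp, expand, Matrix.sum_apply, Matrix.smul_apply, smul_eq_mul]
  rw [Finset.sum_mul_sum]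
  rw [← Equiv.sum_comp (combEquiv (ιI' := ιI') (ιO' := ιO') (ιI'' := ιI'') (ιO'' := ιO''))
    (fun u => (prodCoeffs w z u : ℂ) * hsTerm (fun p => prodBasis (σI' p) (σI'' p))
      (fun p => prodBasis (σO' p) (σO'' p)) u x y)]
  rw [Fintype.sum_prod_type]
  refine Finset.sum_congr rfl fun t _ => Finset.sum_congr rfl fun s _ => ?_
  rw [show (combEquiv (ιI' := ιI') (ιO' := ιO') (ιI'' := ιI'') (ιO'' := ιO'')) (t, s)
    = combineTerm t s from rfl]
  simp only [combEquiv, Equiv.coe_fn_mk, prodCoeffs, hsTerm_combine]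
  have e1 : (fun p => ((combineTerm t s p).1.1, (combineTerm t s p).2.1)) = t := rfl
  have e2 : (fun p => ((combineTerm t s p).1.2, (combineTerm t s p).2.2)) = s := rfl
  rw [e1, e2]
  push_cast
  ring

end AuxProd
section AuxPairing

lemma pairing (v : (∀ _ : Fin 2, (Fin 4 × Fin 4) × (Fin 4 × Fin 4)) → ℝ)
    (u : ∀ _ : Fin 2, (Fin 4 × Fin 4) × (Fin 4 × Fin 4)) :
    (expand (fun _ : Fin 2 => prodBasis pauli pauli) (fun _ : Fin 2 => prodBasis pauli pauli) v
      * hsTerm (fun _ : Fin 2 => prodBasis pauli pauli) (fun _ : Fin 2 => prodBasis pauli pauli)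
          u).trace = 256 * v u := by
  have key : ∀ t : ∀ _ : Fin 2, (Fin 4 × Fin 4) × (Fin 4 × Fin 4),
      (∏ p : Fin 2, ((if (t p).1 = (u p).1 then (4 : ℂ) else 0)
        * (if (t p).2 = (u p).2 then (4 : ℂ) else 0))) = if t = u then 256 else 0 := by
    intro t
    by_cases h : t = u
    · subst h; simp [Fin.prod_univ_two]; norm_num
    · rw [if_neg h]
      have hex : ∃ p, t p ≠ u p := by
        by_contra hc; push_neg at hc; exact h (funext hc)
      obtain ⟨p, hp⟩ := hex
      refine Finset.prod_eq_zero (Finset.mem_univ p) ?_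
      by_cases h1 : (t p).1 = (u p).1
      · have h2 : (t p).2 ≠ (u p).2 := fun h2 => hp (Prod.ext h1 h2)
        simp [h2]
      · simp [h1]
  simp only [expand, Finset.sum_mul, smul_mul_assoc, Matrix.trace_sum, Matrix.trace_smul,
    trace_hsTerm_mul, prodBasis_mul_trace, key, smul_ite, smul_zero]
  rw [Finset.sum_ite_eq' Finset.univ u]
  simp [mul_comm]

end AuxPairing
section AuxFinal

/-- the bad term of `Wq ⊗ Wq` -/
def u0 : ∀ _ : Fin 2, (Fin 4 × Fin 4) × (Fin 4 × Fin 4) := combineTerm tA tB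

lemma u0_nontrivial : NontrivialTerm u0 :=
  ⟨0, fun h => absurd h.1 (by decide)⟩

lemma u0_not_inType : ∀ p : Fin 2, ¬ InTypeAt u0 p := by
  intro p h
  obtain ⟨h1, h2⟩ := h
  fin_cases p
  · exact absurd h2 (by decide)
  · exact absurd h2 (by decide)

end AuxFinal
section Statement10

/-- There exist valid two-party processes `W` (on parties `A'`, `B'`) and `Z` (on
parties `A''`, `B''`), all systems being qubits with the Pauli Hilbert–Schmidt
bases—which may moreover be taken equal to each other and classical (diagonal in the
computational basis), namely an equal-weight mixture of a classical identity channel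
from one party to the other and one in the opposite direction—such that the tensor
product `W ⊗ Z` is not a valid process for the combined parties `A = A'A''` and
`B = B'B''`. -/
theorem statement10 :
    ∃ W Z : Matrix ((p : Fin 2) → Fin 2 × Fin 2) ((p : Fin 2) → Fin 2 × Fin 2) ℂ,
      IsProcess (fun _ : Fin 2 => pauli) (fun _ : Fin 2 => pauli) W ∧
      IsProcess (fun _ : Fin 2 => pauli) (fun _ : Fin 2 => pauli) Z ∧
      W = Z ∧
      (∀ x y, x ≠ y → W x y = 0) ∧
      ¬ IsProcess (fun _ : Fin 2 => prodBasis pauli pauli)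
          (fun _ : Fin 2 => prodBasis pauli pauli) (prodOp W Z) := by
  refine ⟨Wq, Wq, ⟨wq, Wq_isProcessWith⟩, ⟨wq, Wq_isProcessWith⟩, rfl, Wq_offdiag, ?_⟩
  rintro ⟨w', hpsd, htr, hexp, hog⟩
  have h1 : prodOp Wq Wq
      = expand (fun _ : Fin 2 => prodBasis pauli pauli) (fun _ : Fin 2 => prodBasis pauli pauli)
          (prodCoeffs wq wq) := by
    rw [Wq_eq_expand]
    exact prodOp_expand _ _ _ _ wq wq
  have h2 := pairing w' u0
  rw [← hexp, h1, pairing (prodCoeffs wq wq) u0] at h2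
  have h3 : ((prodCoeffs wq wq u0 : ℝ) : ℂ) = (w' u0 : ℂ) :=
    mul_left_cancel₀ (by norm_num : (256 : ℂ) ≠ 0) h2
  have h4 : prodCoeffs wq wq u0 = w' u0 := by exact_mod_cast h3
  have h5 : prodCoeffs wq wq u0 = wq tA * wq tB := rfl
  have hA : wq tA = 8⁻¹ := by
    have n1 : tA ≠ tI := by decide
    have n2 : tA ≠ tB := by decide
    simp [wq, n1, n2]
  have hB : wq tB = 8⁻¹ := by
    have n1 : tB ≠ tI := by decide
    have n2 : tB ≠ tA := by decide
    simp [wq, n1, n2]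
  have hne : w' u0 ≠ 0 := by
    rw [← h4, h5, hA, hB]; norm_num
  obtain ⟨p, hIn⟩ := hog u0 hne u0_nontrivial
  exact u0_not_inType p hIn

end Statement10

end ProcessPaper
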